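/- The function Ω is (Fréchet) differentiable at the Fermi points, and its derivative at k_F^± is the ℝ-linear map k' = (k₁', k₂') ↦ (3/2)(i k₁' ± k₂') from ℝ² to ℂ; consequently, for each sign ± there exist constants C > 0 and ε > 0 such that |Ω(k_F^± + k') − (3/2)(i k₁' ± k₂')| ≤ C |k'|² whenever |k'| ≤ ε. In other words, the dispersion of graphene is asymptotically relativistic (linear) near the Fermi points. -/

import Mathlib

open Real Complex

/-- The dot product of two vectors in `ℝ²`. -/
noncomputable def dot (k l : EuclideanSpace ℝ (Fin 2)) : ℝ := k 0 * l 0 + k 1 * l 1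

/-- First basis vector of the triangular lattice. -/
noncomputable def ell1 : EuclideanSpace ℝ (Fin 2) := !₂[3/2, -Real.sqrt 3 / 2]

/-- Second basis vector of the triangular lattice. -/
noncomputable def ell2 : EuclideanSpace ℝ (Fin 2) := !₂[3/2, Real.sqrt 3 / 2]

/-- The function `Ω(k) = 1 + e^{-i k·ℓ₁} + e^{-i k·ℓ₂}`. -/
noncomputable def Omega (k : EuclideanSpace ℝ (Fin 2)) : ℂ :=
  1 + Complex.exp (-Complex.I * (dot k ell1)) + Complex.exp (-Complex.I * (dot k ell2))

/-- The Fermi points `k_F^±`, parametrized by the sign `s = ±1`. -/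
noncomputable def kF (s : ℝ) : EuclideanSpace ℝ (Fin 2) :=
  !₂[2 * π / 3, s * (2 * π / (3 * Real.sqrt 3))]

lemma expFact (s : ℝ) (hs : s = 1 ∨ s = -1) :
    Complex.exp (-Complex.I * ((π - s * π / 3 : ℝ) : ℂ))
      = -(1/2) - ((s * (Real.sqrt 3 / 2) : ℝ) : ℂ) * Complex.I := by
  rw [show -Complex.I * ((π - s * π / 3 : ℝ) : ℂ)
        = ((-(π - s * π / 3) : ℝ) : ℂ) * Complex.I by push_cast; ring]
  rw [Complex.exp_mul_I, ← Complex.ofReal_cos, ← Complex.ofReal_sin]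
  have hc : Real.cos (-(π - s * π / 3)) = -(1/2) := by
    rcases hs with h | h <;> subst h
    · rw [show (-(π - (1:ℝ) * π / 3)) = -(π - π/3) by ring, Real.cos_neg,
        Real.cos_pi_sub, Real.cos_pi_div_three]
    · rw [show (-(π - (-1:ℝ) * π / 3)) = -(π - (-(π/3))) by ring, Real.cos_neg,
        Real.cos_pi_sub, Real.cos_neg, Real.cos_pi_div_three]
  have hsn : Real.sin (-(π - s * π / 3)) = -(s * (Real.sqrt 3 / 2)) := by
    rcases hs with h | h <;> subst h
    · rw [show (-(π - (1:ℝ) * π / 3)) = -(π - π/3) by ring, Real.sin_neg,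
        Real.sin_pi_sub, Real.sin_pi_div_three]; ring
    · rw [show (-(π - (-1:ℝ) * π / 3)) = -(π - (-(π/3))) by ring, Real.sin_neg,
        Real.sin_pi_sub, Real.sin_neg, Real.sin_pi_div_three]; ring
  rw [hc, hsn]; push_cast; ring

lemma dot_kF_ell1 (s : ℝ) : dot (kF s) ell1 = π - s * π / 3 := by
  have h3 : Real.sqrt 3 ≠ 0 := by positivity
  simp [dot, kF, ell1]
  field_simp
  ring

lemma dot_kF_ell2 (s : ℝ) : dot (kF s) ell2 = π - (-s) * π / 3 := by
  have h3 : Real.sqrt 3 ≠ 0 := by positivity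
  simp [dot, kF, ell2]
  field_simp
  ring

lemma dot_add_left (a b l : EuclideanSpace ℝ (Fin 2)) :
    dot (a + b) l = dot a l + dot b l := by
  simp [dot, PiLp.add_apply]; ring

lemma dot_ell1 (k : EuclideanSpace ℝ (Fin 2)) :
    dot k ell1 = 3/2 * k 0 - Real.sqrt 3 / 2 * k 1 := by
  simp [dot, ell1]; ring

lemma dot_ell2 (k : EuclideanSpace ℝ (Fin 2)) :
    dot k ell2 = 3/2 * k 0 + Real.sqrt 3 / 2 * k 1 := by
  simp [dot, ell2]; ring

/-- The key algebraic identity. -/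
lemma ident (s : ℝ) (hs : s = 1 ∨ s = -1) (k' : EuclideanSpace ℝ (Fin 2)) :
    Omega (kF s + k') - (3/2 : ℂ) * (Complex.I * (k' 0 : ℝ) + (s : ℝ) * (k' 1 : ℝ))
      = (-(1/2) - ((s * (Real.sqrt 3 / 2) : ℝ) : ℂ) * Complex.I)
          * (Complex.exp (-Complex.I * ((dot k' ell1 : ℝ) : ℂ)) - 1
              + Complex.I * ((dot k' ell1 : ℝ) : ℂ))
        + (-(1/2) + ((s * (Real.sqrt 3 / 2) : ℝ) : ℂ) * Complex.I)
          * (Complex.exp (-Complex.I * ((dot k' ell2 : ℝ) : ℂ)) - 1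
              + Complex.I * ((dot k' ell2 : ℝ) : ℂ)) := by
  have hs' : -s = 1 ∨ -s = -1 := by rcases hs with h | h <;> subst h <;> simp
  have h1 : Complex.exp (-Complex.I * ((dot (kF s + k') ell1 : ℝ) : ℂ))
      = (-(1/2) - ((s * (Real.sqrt 3 / 2) : ℝ) : ℂ) * Complex.I)
        * Complex.exp (-Complex.I * ((dot k' ell1 : ℝ) : ℂ)) := by
    rw [dot_add_left, dot_kF_ell1,
      show -Complex.I * (((π - s * π / 3) + dot k' ell1 : ℝ) : ℂ)
        = -Complex.I * ((π - s * π / 3 : ℝ) : ℂ) + -Complex.I * ((dot k' ell1 : ℝ) : ℂ) by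
          push_cast; ring,
      Complex.exp_add, expFact s hs]
  have h2 : Complex.exp (-Complex.I * ((dot (kF s + k') ell2 : ℝ) : ℂ))
      = (-(1/2) + ((s * (Real.sqrt 3 / 2) : ℝ) : ℂ) * Complex.I)
        * Complex.exp (-Complex.I * ((dot k' ell2 : ℝ) : ℂ)) := by
    rw [dot_add_left, dot_kF_ell2,
      show -Complex.I * (((π - (-s) * π / 3) + dot k' ell2 : ℝ) : ℂ)
        = -Complex.I * ((π - (-s) * π / 3 : ℝ) : ℂ) + -Complex.I * ((dot k' ell2 : ℝ) : ℂ) by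
          push_cast; ring,
      Complex.exp_add, expFact (-s) hs']
    push_cast; ring
  rw [Omega, h1, h2, dot_ell1, dot_ell2]
  have hw : ((Real.sqrt 3 : ℝ) : ℂ) * ((Real.sqrt 3 : ℝ) : ℂ) = 3 := by
    rw [← Complex.ofReal_mul, Real.mul_self_sqrt (by norm_num)]
    norm_num
  push_cast
  linear_combination ((s : ℂ) * (k' 1 : ℝ) / 2) * hw - ((s : ℂ) * ((Real.sqrt 3 : ℝ) : ℂ)^2 * ((k' 1 : ℝ) : ℂ) / 2) * Complex.I_sq


lemma abs_exp_term (t : ℝ) (ht : |t| ≤ 1) :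
    ‖Complex.exp (-Complex.I * (t : ℂ)) - 1 + Complex.I * (t : ℂ)‖ ≤ t ^ 2 := by
  have habs : ‖-Complex.I * (t : ℂ)‖ = |t| := by
    simp [map_mul]
  have h1 : ‖-Complex.I * (t : ℂ)‖ ≤ 1 := by rw [habs]; exact ht
  have h2 := Complex.norm_exp_sub_one_sub_id_le h1
  rw [show Complex.exp (-Complex.I * (t : ℂ)) - 1 + Complex.I * (t : ℂ)
      = Complex.exp (-Complex.I * (t : ℂ)) - 1 - (-Complex.I * (t : ℂ)) by ring]
  calc _ ≤ ‖-Complex.I * (t : ℂ)‖ ^ 2 := h2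
    _ = t ^ 2 := by rw [habs]; exact _root_.sq_abs t

lemma coord_le_norm (k : EuclideanSpace ℝ (Fin 2)) (i : Fin 2) : |k i| ≤ ‖k‖ := by
  rw [EuclideanSpace.norm_eq]
  rw [show |k i| = Real.sqrt (|k i| ^ 2) by rw [Real.sqrt_sq (abs_nonneg _)]]
  apply Real.sqrt_le_sqrt
  rw [Fin.sum_univ_two]
  fin_cases i <;> simp [sq_abs, Real.norm_eq_abs] <;> positivity

lemma sqrt3_le_two : Real.sqrt 3 ≤ 2 := by
  nlinarith [Real.sq_sqrt (by norm_num : (0:ℝ) ≤ 3), Real.sqrt_nonneg 3]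

lemma dot_ell_bound (k : EuclideanSpace ℝ (Fin 2)) :
    |dot k ell1| ≤ 3 * ‖k‖ ∧ |dot k ell2| ≤ 3 * ‖k‖ := by
  have h0 := coord_le_norm k 0
  have h1 := coord_le_norm k 1
  have hw := sqrt3_le_two
  have hwn := Real.sqrt_nonneg 3
  have ha0 := abs_nonneg (k 0)
  have ha1 := abs_nonneg (k 1)
  have e0 : -(‖k‖) ≤ k 0 ∧ k 0 ≤ ‖k‖ := abs_le.mp h0
  have e1 : -(‖k‖) ≤ k 1 ∧ k 1 ≤ ‖k‖ := abs_le.mp h1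
  constructor
  · rw [dot_ell1, abs_le]
    constructor <;> nlinarith [e0.1, e0.2, e1.1, e1.2]
  · rw [dot_ell2, abs_le]
    constructor <;> nlinarith [e0.1, e0.2, e1.1, e1.2]

lemma key_bound (s : ℝ) (hs : s = 1 ∨ s = -1) (k' : EuclideanSpace ℝ (Fin 2))
    (hk : ‖k'‖ ≤ 1/3) :
    ‖Omega (kF s + k')
        - (3/2 : ℂ) * (Complex.I * (k' 0 : ℝ) + (s : ℝ) * (k' 1 : ℝ))‖ ≤ 18 * ‖k'‖ ^ 2 := by
  have hnn : (0:ℝ) ≤ ‖k'‖ := norm_nonneg _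
  obtain ⟨hb1, hb2⟩ := dot_ell_bound k'
  have ht1 : |dot k' ell1| ≤ 1 := by linarith
  have ht2 : |dot k' ell2| ≤ 1 := by linarith
  have hE1 := abs_exp_term (dot k' ell1) ht1
  have hE2 := abs_exp_term (dot k' ell2) ht2
  have he1 : ‖-(1/2) - ((s * (Real.sqrt 3 / 2) : ℝ) : ℂ) * Complex.I‖ = 1 := by
    rw [← expFact s hs, Complex.norm_exp]
    simp
  have hs' : -s = 1 ∨ -s = -1 := by rcases hs with h | h <;> subst h <;> simp
  have he2 : ‖-(1/2) + ((s * (Real.sqrt 3 / 2) : ℝ) : ℂ) * Complex.I‖ = 1 := by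
    have := expFact (-s) hs'
    rw [show (-(1/2) + ((s * (Real.sqrt 3 / 2) : ℝ) : ℂ) * Complex.I)
        = -(1/2) - (((-s) * (Real.sqrt 3 / 2) : ℝ) : ℂ) * Complex.I by push_cast; ring,
      ← this, Complex.norm_exp]
    simp
  rw [ident s hs k']
  have hsq1 : (dot k' ell1) ^ 2 ≤ 9 * ‖k'‖ ^ 2 := by nlinarith [abs_nonneg (dot k' ell1), _root_.sq_abs (dot k' ell1)]
  have hsq2 : (dot k' ell2) ^ 2 ≤ 9 * ‖k'‖ ^ 2 := by nlinarith [abs_nonneg (dot k' ell2), _root_.sq_abs (dot k' ell2)]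
  calc ‖_‖ ≤ ‖(-(1/2) - ((s * (Real.sqrt 3 / 2) : ℝ) : ℂ) * Complex.I)
          * (Complex.exp (-Complex.I * ((dot k' ell1 : ℝ) : ℂ)) - 1
              + Complex.I * ((dot k' ell1 : ℝ) : ℂ))‖
        + ‖(-(1/2) + ((s * (Real.sqrt 3 / 2) : ℝ) : ℂ) * Complex.I)
          * (Complex.exp (-Complex.I * ((dot k' ell2 : ℝ) : ℂ)) - 1
              + Complex.I * ((dot k' ell2 : ℝ) : ℂ))‖ := norm_add_le _ _
    _ ≤ (dot k' ell1) ^ 2 + (dot k' ell2) ^ 2 := by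
        rw [norm_mul, norm_mul, he1, he2, one_mul, one_mul]
        exact add_le_add hE1 hE2
    _ ≤ 18 * ‖k'‖ ^ 2 := by linarith

noncomputable def Dmap (s : ℝ) : EuclideanSpace ℝ (Fin 2) →L[ℝ] ℂ :=
  LinearMap.toContinuousLinearMap
    { toFun := fun k' => (3/2 : ℂ) * (Complex.I * (k' 0 : ℝ) + (s : ℝ) * (k' 1 : ℝ)),
      map_add' := by
        intro a b
        simp only [PiLp.add_apply]
        push_cast
        ring,
      map_smul' := by
        intro c a
        simp only [PiLp.smul_apply, smul_eq_mul, RingHom.id_apply, Complex.real_smul]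
        push_cast
        ring }

lemma Dmap_apply (s : ℝ) (k' : EuclideanSpace ℝ (Fin 2)) :
    Dmap s k' = (3/2 : ℂ) * (Complex.I * (k' 0 : ℝ) + (s : ℝ) * (k' 1 : ℝ)) := rfl

lemma omega_kF (s : ℝ) (hs : s = 1 ∨ s = -1) : Omega (kF s) = 0 := by
  have h := ident s hs 0
  have hd1 : dot 0 ell1 = 0 := by simp [dot]
  have hd2 : dot 0 ell2 = 0 := by simp [dot]
  rw [add_zero, hd1, hd2] at h
  simpa using h

lemma hasFDeriv (s : ℝ) (hs : s = 1 ∨ s = -1) : HasFDerivAt Omega (Dmap s) (kF s) := by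
  rw [hasFDerivAt_iff_isLittleO_nhds_zero]
  rw [Asymptotics.isLittleO_iff]
  intro c hc
  have hr : (0:ℝ) < min (1/3) (c/18) := by
    apply lt_min <;> [norm_num; positivity]
  filter_upwards [Metric.closedBall_mem_nhds (0 : EuclideanSpace ℝ (Fin 2)) hr] with h hh
  rw [Metric.mem_closedBall, dist_zero_right] at hh
  have h13 : ‖h‖ ≤ 1/3 := le_trans hh (min_le_left _ _)
  have hc18 : ‖h‖ ≤ c/18 := le_trans hh (min_le_right _ _)
  have hb := key_bound s hs h h13
  rw [omega_kF s hs, sub_zero, Dmap_apply]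
  rw [show ‖Omega (kF s + h) - 3 / 2 * (Complex.I * ↑(h 0) + ↑s * ↑(h 1))‖
      = ‖Omega (kF s + h) - 3 / 2 * (Complex.I * ↑(h 0) + ↑s * ↑(h 1))‖ from rfl]
  have hnn : (0:ℝ) ≤ ‖h‖ := norm_nonneg _
  nlinarith [hb]

/-- `Ω` is Fréchet differentiable at the Fermi points `k_F^±`, with derivative
the ℝ-linear map `k' ↦ (3/2)(i k₁' ± k₂')`; consequently near `k_F^±` one has the quadratic
error bound `|Ω(k_F^± + k') − (3/2)(i k₁' ± k₂')| ≤ C |k'|²`: the dispersion relation is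
asymptotically relativistic near the Fermi points. -/
theorem omega_differentiable_at_fermi_points (s : ℝ) (hs : s = 1 ∨ s = -1) :
    (∃ D : EuclideanSpace ℝ (Fin 2) →L[ℝ] ℂ,
      (∀ k' : EuclideanSpace ℝ (Fin 2),
        D k' = (3/2 : ℂ) * (Complex.I * (k' 0 : ℝ) + (s : ℝ) * (k' 1 : ℝ))) ∧
      HasFDerivAt Omega D (kF s)) ∧
    (∃ C > (0:ℝ), ∃ ε > (0:ℝ), ∀ k' : EuclideanSpace ℝ (Fin 2), ‖k'‖ ≤ ε →
      ‖Omega (kF s + k')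
          - (3/2 : ℂ) * (Complex.I * (k' 0 : ℝ) + (s : ℝ) * (k' 1 : ℝ))‖ ≤ C * ‖k'‖ ^ 2) := by
  constructor
  · exact ⟨Dmap s, fun k' => Dmap_apply s k', hasFDeriv s hs⟩
  · exact ⟨18, by norm_num, 1/3, by norm_num, fun k' hk => key_bound s hs k' hk⟩
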